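/- Let (Ω, F, P) be a probability space and T > 0, μ ∈ ℝ. Let (λ_i)_{i∈ℕ} be nonnegative reals with S := Σ_i √λ_i < ∞, let (e_i)_{i∈ℕ} be functions e_i : ℝ → ℝ with |e_i(x)| ≤ C for all i and x (C ≥ 0), and let (β_i)_{i∈ℕ} be measurable real random variables with E(β_i²) = 1 for all i. Let X₀ : Ω → ℝ be measurable with E(X₀²) < ∞. Suppose X : Ω × [0,T] → ℝ is such that for P-almost every ω the path t ↦ X(ω,t) is continuous, for every t ∈ [0,T] the series Σ_i √λ_i β_i(ω) e_i(X(ω,s)) converges absolutely for a.e. s and X(ω,t) = X₀(ω) + μ t + ∫₀ᵗ Σ_i √λ_i β_i(ω) e_i(X(ω,s)) ds, and the map ω ↦ sup_{t∈[0,T]} |X(ω,t)| is measurable. Then there exists a constant K, depending only on T and C, such that E( sup_{t∈[0,T]} X(t)² ) ≤ K · ( E(X₀²) + μ² + S² ). In particular E(sup_{t∈[0,T]} X(t)²) < ∞. -/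

import Mathlib

open MeasureTheory ENNReal

lemma ennreal_cs13 (x y : ℕ → ℝ≥0∞) :
    (∑' i, x i * y i) ^ 2 ≤ (∑' i, (x i) ^ 2) * (∑' i, (y i) ^ 2) := by
  have hconj : Real.HolderConjugate 2 2 := Real.HolderConjugate.two_two
  have hx : AEMeasurable x (Measure.count : Measure ℕ) :=
    (measurable_of_countable x).aemeasurable
  have hy : AEMeasurable y (Measure.count : Measure ℕ) :=
    (measurable_of_countable y).aemeasurable
  have h := ENNReal.lintegral_mul_le_Lp_mul_Lq Measure.count hconj hx hy
  simp only [Pi.mul_apply, lintegral_count] at h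
  have e1 : ∀ z : ℝ≥0∞, z ^ (2:ℝ) = z ^ (2:ℕ) := fun z => by
    rw [← ENNReal.rpow_natCast]; norm_num
  have e2 : ∀ A : ℝ≥0∞, (A ^ ((1:ℝ)/2)) ^ (2:ℕ) = A := fun A => by
    rw [← ENNReal.rpow_natCast, ← ENNReal.rpow_mul]; norm_num
  calc (∑' i, x i * y i) ^ 2
      ≤ ((∑' a, x a ^ (2:ℝ)) ^ ((1:ℝ)/2) * (∑' a, y a ^ (2:ℝ)) ^ ((1:ℝ)/2)) ^ 2 :=
        pow_le_pow_left₀ zero_le h 2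
    _ = (∑' i, (x i) ^ 2) * (∑' i, (y i) ^ 2) := by
        rw [mul_pow, e2, e2]; simp only [e1]

/-- Lemma of Section 3: the characteristic curves
`X(t) = X₀ + μt + ∫₀ᵗ Σᵢ √λᵢ βᵢ eᵢ(X(s)) ds` of the space-dependent advection
equation with Karhunen–Loève coefficient belong to `L²(Ω; C([0,T]; ℝ))`:
there is a constant `K`, depending only on `T` and `C`, with
`E(sup_{t∈[0,T]} X(t)²) ≤ K (E(X₀²) + μ² + (Σᵢ √λᵢ)²) < ∞`. -/
theorem stmt13 (T C : ℝ) (hT : 0 < T) (hC : 0 ≤ C) :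
    ∃ K : ℝ, 0 < K ∧
      ∀ (Ω : Type) (_ : MeasurableSpace Ω) (P : Measure Ω), IsProbabilityMeasure P →
      ∀ (μ : ℝ) (l : ℕ → ℝ), (∀ i, 0 ≤ l i) →
        (Summable fun i => Real.sqrt (l i)) →
      ∀ (e : ℕ → ℝ → ℝ), (∀ i x, |e i x| ≤ C) →
      ∀ (β : ℕ → Ω → ℝ), (∀ i, Measurable (β i)) →
        (∀ i, Integrable (fun ω => (β i ω) ^ 2) P) →
        (∀ i, ∫ ω, (β i ω) ^ 2 ∂P = 1) →
      ∀ (X₀ : Ω → ℝ), Measurable X₀ → Integrable (fun ω => (X₀ ω) ^ 2) P →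
      ∀ (X : Ω → ℝ → ℝ),
        (∀ᵐ ω ∂P, ContinuousOn (X ω) (Set.Icc 0 T)) →
        (∀ᵐ ω ∂P, ∀ t ∈ Set.Icc (0 : ℝ) T,
          (∀ᵐ s ∂(volume.restrict (Set.Icc (0 : ℝ) t)),
            Summable fun i => |Real.sqrt (l i) * β i ω * e i (X ω s)|) ∧
          X ω t = X₀ ω + μ * t +
            ∫ s in (0 : ℝ)..t, ∑' i, Real.sqrt (l i) * β i ω * e i (X ω s)) →
        Measurable (fun ω => ⨆ t : Set.Icc (0 : ℝ) T, |X ω t|) →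
        ∫⁻ ω, ENNReal.ofReal ((⨆ t : Set.Icc (0 : ℝ) T, |X ω t|) ^ 2) ∂P ≤
          ENNReal.ofReal
            (K * ((∫ ω, (X₀ ω) ^ 2 ∂P) + μ ^ 2 + (∑' i, Real.sqrt (l i)) ^ 2)) := by
  refine ⟨3 * (1 + T ^ 2) * (1 + C ^ 2), by positivity, ?_⟩
  intro Ω _ P hP μ l hl hsum e he β hβm hβi hβE X₀ hX₀m hX₀i X hcont hX hsupm
  set S : ℝ := ∑' i, Real.sqrt (l i) with hS
  have hS0 : 0 ≤ S := tsum_nonneg fun i => Real.sqrt_nonneg _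
  set Gl : Ω → ℝ≥0∞ := fun ω => ∑' i, ENNReal.ofReal (Real.sqrt (l i) * |β i ω|) with hGldef
  have hGlm : Measurable Gl :=
    Measurable.ennreal_tsum fun i => ((hβm i).abs.const_mul _).ennreal_ofReal
  have hE0 : 0 ≤ ∫ ω, X₀ ω ^ 2 ∂P := integral_nonneg fun ω => sq_nonneg _
  have hsumofReal : (∑' i, ENNReal.ofReal (Real.sqrt (l i))) = ENNReal.ofReal S :=
    (ENNReal.ofReal_tsum_of_nonneg (fun i => Real.sqrt_nonneg _) hsum).symm
  -- Step A : second moment of Gl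
  have hA : ∫⁻ ω, Gl ω ^ 2 ∂P ≤ ENNReal.ofReal S ^ 2 := by
    have t1 : ∀ (i : ℕ) (ω : Ω), ENNReal.ofReal (Real.sqrt (l i) * |β i ω|)
        = ENNReal.ofReal (Real.sqrt (Real.sqrt (l i))) *
          ENNReal.ofReal (Real.sqrt (Real.sqrt (l i)) * |β i ω|) := by
      intro i ω
      rw [← ENNReal.ofReal_mul (Real.sqrt_nonneg _), ← mul_assoc,
        Real.mul_self_sqrt (Real.sqrt_nonneg _)]
    have t2 : ∀ i : ℕ, ENNReal.ofReal (Real.sqrt (Real.sqrt (l i))) ^ 2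
        = ENNReal.ofReal (Real.sqrt (l i)) := by
      intro i
      rw [← ENNReal.ofReal_pow (Real.sqrt_nonneg _), Real.sq_sqrt (Real.sqrt_nonneg _)]
    have t3 : ∀ (i : ℕ) (ω : Ω), ENNReal.ofReal (Real.sqrt (Real.sqrt (l i)) * |β i ω|) ^ 2
        = ENNReal.ofReal (Real.sqrt (l i) * β i ω ^ 2) := by
      intro i ω
      rw [← ENNReal.ofReal_pow (by positivity), mul_pow,
        Real.sq_sqrt (Real.sqrt_nonneg _), sq_abs]
    have hpt : ∀ ω, Gl ω ^ 2 ≤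
        (∑' i, ENNReal.ofReal (Real.sqrt (l i))) *
        (∑' i, ENNReal.ofReal (Real.sqrt (l i) * β i ω ^ 2)) := by
      intro ω
      have h := ennreal_cs13 (fun i => ENNReal.ofReal (Real.sqrt (Real.sqrt (l i))))
        (fun i => ENNReal.ofReal (Real.sqrt (Real.sqrt (l i)) * |β i ω|))
      simp only [hGldef]
      calc (∑' i, ENNReal.ofReal (Real.sqrt (l i) * |β i ω|)) ^ 2
          = (∑' i, ENNReal.ofReal (Real.sqrt (Real.sqrt (l i))) *
              ENNReal.ofReal (Real.sqrt (Real.sqrt (l i)) * |β i ω|)) ^ 2 := by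
            simp only [t1]
        _ ≤ (∑' i, ENNReal.ofReal (Real.sqrt (Real.sqrt (l i))) ^ 2) *
            (∑' i, ENNReal.ofReal (Real.sqrt (Real.sqrt (l i)) * |β i ω|) ^ 2) := h
        _ = (∑' i, ENNReal.ofReal (Real.sqrt (l i))) *
            (∑' i, ENNReal.ofReal (Real.sqrt (l i) * β i ω ^ 2)) := by
            simp only [t2, t3]
    have hHm : ∀ i : ℕ, Measurable fun ω => ENNReal.ofReal (Real.sqrt (l i) * β i ω ^ 2) :=
      fun i => (((hβm i).pow_const 2).const_mul _).ennreal_ofReal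
    have hint : ∫⁻ ω, (∑' i, ENNReal.ofReal (Real.sqrt (l i) * β i ω ^ 2)) ∂P
        = ENNReal.ofReal S := by
      rw [lintegral_tsum fun i => (hHm i).aemeasurable]
      have h1 : ∀ i : ℕ, ∫⁻ ω, ENNReal.ofReal (Real.sqrt (l i) * β i ω ^ 2) ∂P
          = ENNReal.ofReal (Real.sqrt (l i)) := by
        intro i
        calc ∫⁻ ω, ENNReal.ofReal (Real.sqrt (l i) * β i ω ^ 2) ∂P
            = ∫⁻ ω, ENNReal.ofReal (Real.sqrt (l i)) * ENNReal.ofReal (β i ω ^ 2) ∂P := by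
              simp_rw [← ENNReal.ofReal_mul (Real.sqrt_nonneg _)]
          _ = ENNReal.ofReal (Real.sqrt (l i)) * ∫⁻ ω, ENNReal.ofReal (β i ω ^ 2) ∂P :=
              lintegral_const_mul _ ((hβm i).pow_const 2).ennreal_ofReal
          _ = ENNReal.ofReal (Real.sqrt (l i)) := by
              rw [← ofReal_integral_eq_lintegral_ofReal (hβi i)
                (ae_of_all _ fun ω => sq_nonneg _), hβE i]
              simp
      simp_rw [h1]
      exact hsumofReal
    calc ∫⁻ ω, Gl ω ^ 2 ∂P
        ≤ ∫⁻ ω, (∑' i, ENNReal.ofReal (Real.sqrt (l i))) *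
            (∑' i, ENNReal.ofReal (Real.sqrt (l i) * β i ω ^ 2)) ∂P := lintegral_mono hpt
      _ = (∑' i, ENNReal.ofReal (Real.sqrt (l i))) *
            ∫⁻ ω, (∑' i, ENNReal.ofReal (Real.sqrt (l i) * β i ω ^ 2)) ∂P :=
          lintegral_const_mul _ (Measurable.ennreal_tsum hHm)
      _ = ENNReal.ofReal S ^ 2 := by rw [hint, hsumofReal, sq]
  -- Step A' : Gl is a.e. finite
  have hfin : ∀ᵐ ω ∂P, Gl ω < ⊤ := by
    have h2 : ∀ᵐ ω ∂P, Gl ω ^ 2 < ⊤ :=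
      ae_lt_top (hGlm.pow_const 2) (lt_of_le_of_lt hA (ENNReal.pow_lt_top ENNReal.ofReal_lt_top)).ne
    filter_upwards [h2] with ω h
    rw [lt_top_iff_ne_top] at h ⊢
    intro hc
    rw [hc] at h
    simp at h
  -- Step B : pathwise bound
  set F : Ω → ℝ≥0∞ := fun ω => 3 * ENNReal.ofReal (X₀ ω ^ 2) +
      3 * ENNReal.ofReal (μ ^ 2 * T ^ 2) +
      3 * ENNReal.ofReal (T ^ 2 * C ^ 2) * Gl ω ^ 2 with hFdef
  have hae : ∀ᵐ ω ∂P,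
      ENNReal.ofReal ((⨆ t : Set.Icc (0 : ℝ) T, |X ω t|) ^ 2) ≤ F ω := by
    filter_upwards [hX, hfin] with ω hXω hfinω
    have hnn : ∀ i, 0 ≤ Real.sqrt (l i) * |β i ω| := fun i => by positivity
    have hGsum : Summable fun i => Real.sqrt (l i) * |β i ω| := by
      have hne : (∑' i, ((Real.sqrt (l i) * |β i ω|).toNNReal : ℝ≥0∞)) ≠ ⊤ := hfinω.ne
      have h2 := ENNReal.tsum_coe_ne_top_iff_summable.mp hne
      have h3 := NNReal.summable_coe.mpr h2
      exact h3.congr fun i => Real.coe_toNNReal _ (hnn i)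
    set G : ℝ := ∑' i, Real.sqrt (l i) * |β i ω| with hGdef
    have hG0 : 0 ≤ G := tsum_nonneg hnn
    have hGlω : Gl ω = ENNReal.ofReal G := (ENNReal.ofReal_tsum_of_nonneg hnn hGsum).symm
    have hbd : ∀ t ∈ Set.Icc (0:ℝ) T, |X ω t| ≤ |X₀ ω| + |μ| * T + T * (C * G) := by
      intro t ht
      obtain ⟨hs, heq⟩ := hXω t ht
      have hTCG : (0:ℝ) ≤ T * (C * G) := by positivity
      have hIb : |∫ s in (0:ℝ)..t, ∑' i, Real.sqrt (l i) * β i ω * e i (X ω s)|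
          ≤ T * (C * G) := by
        by_cases hInt : IntervalIntegrable
            (fun s => ∑' i, Real.sqrt (l i) * β i ω * e i (X ω s)) volume 0 t
        · have hsub : Set.uIoc (0:ℝ) t ⊆ Set.Icc 0 t := by
            rw [Set.uIoc_of_le ht.1]; exact Set.Ioc_subset_Icc_self
          have h1 : ∀ᵐ s ∂volume.restrict (Set.uIoc (0:ℝ) t),
              ‖∑' i, Real.sqrt (l i) * β i ω * e i (X ω s)‖ ≤ C * G := by
            refine (ae_restrict_of_ae_restrict_of_subset hsub hs).mono fun s hs2 => ?_
            have hterm : ∀ i, |Real.sqrt (l i) * β i ω * e i (X ω s)|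
                ≤ Real.sqrt (l i) * |β i ω| * C := by
              intro i
              rw [abs_mul, abs_mul, abs_of_nonneg (Real.sqrt_nonneg _)]
              exact mul_le_mul_of_nonneg_left (he i _) (by positivity)
            calc ‖∑' i, Real.sqrt (l i) * β i ω * e i (X ω s)‖
                ≤ ∑' i, |Real.sqrt (l i) * β i ω * e i (X ω s)| := by
                  have h := norm_tsum_le_tsum_norm
                    (f := fun i => Real.sqrt (l i) * β i ω * e i (X ω s))
                    (by simp only [Real.norm_eq_abs]; exact hs2)
                  simpa only [Real.norm_eq_abs] using h
              _ ≤ ∑' i, Real.sqrt (l i) * |β i ω| * C :=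
                  Summable.tsum_le_tsum hterm hs2 (hGsum.mul_right C)
              _ = G * C := by rw [tsum_mul_right]
              _ = C * G := mul_comm _ _
          have h2 := intervalIntegral.norm_integral_le_abs_of_norm_le h1
            (intervalIntegrable_const (c := C * G))
          rw [intervalIntegral.integral_const, smul_eq_mul, sub_zero,
            abs_mul, abs_of_nonneg ht.1, abs_of_nonneg (by positivity)] at h2
          calc |∫ s in (0:ℝ)..t, ∑' i, Real.sqrt (l i) * β i ω * e i (X ω s)|
              ≤ t * (C * G) := h2
            _ ≤ T * (C * G) := mul_le_mul_of_nonneg_right ht.2 (by positivity)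
        · rw [intervalIntegral.integral_undef hInt]
          simpa using hTCG
      rw [heq]
      calc |X₀ ω + μ * t + ∫ s in (0:ℝ)..t, ∑' i, Real.sqrt (l i) * β i ω * e i (X ω s)|
          ≤ |X₀ ω + μ * t| +
            |∫ s in (0:ℝ)..t, ∑' i, Real.sqrt (l i) * β i ω * e i (X ω s)| := abs_add_le _ _
        _ ≤ (|X₀ ω| + |μ * t|) +
            |∫ s in (0:ℝ)..t, ∑' i, Real.sqrt (l i) * β i ω * e i (X ω s)| :=
            add_le_add_left (abs_add_le _ _) _
        _ ≤ |X₀ ω| + |μ| * T + T * (C * G) := by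
            have : |μ * t| ≤ |μ| * T := by
              rw [abs_mul, abs_of_nonneg ht.1]
              exact mul_le_mul_of_nonneg_left ht.2 (abs_nonneg _)
            exact add_le_add (add_le_add le_rfl this) hIb
    haveI : Nonempty (Set.Icc (0:ℝ) T) := ⟨⟨0, Set.left_mem_Icc.mpr hT.le⟩⟩
    have hsup : (⨆ t : Set.Icc (0:ℝ) T, |X ω t|) ≤ |X₀ ω| + |μ| * T + T * (C * G) :=
      ciSup_le fun t => hbd t t.2
    have hsup0 : 0 ≤ ⨆ t : Set.Icc (0:ℝ) T, |X ω t| :=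
      Real.iSup_nonneg fun t => abs_nonneg _
    have hsq : (⨆ t : Set.Icc (0:ℝ) T, |X ω t|) ^ 2
        ≤ 3 * (X₀ ω ^ 2) + 3 * (μ ^ 2 * T ^ 2) + 3 * (T ^ 2 * C ^ 2 * G ^ 2) := by
      have h1 : (0:ℝ) ≤ |X₀ ω| := abs_nonneg _
      have h2 : (0:ℝ) ≤ |μ| * T := by positivity
      have h3 : (0:ℝ) ≤ T * (C * G) := by positivity
      nlinarith [sq_abs (X₀ ω), sq_abs μ, hsup, hsup0,
        sq_nonneg (|X₀ ω| - |μ| * T), sq_nonneg (|X₀ ω| - T * (C * G)),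
        sq_nonneg (|μ| * T - T * (C * G))]
    calc ENNReal.ofReal ((⨆ t : Set.Icc (0 : ℝ) T, |X ω t|) ^ 2)
        ≤ ENNReal.ofReal (3 * (X₀ ω ^ 2) + 3 * (μ ^ 2 * T ^ 2) + 3 * (T ^ 2 * C ^ 2 * G ^ 2)) :=
          ENNReal.ofReal_le_ofReal hsq
      _ ≤ ENNReal.ofReal (3 * (X₀ ω ^ 2) + 3 * (μ ^ 2 * T ^ 2)) +
          ENNReal.ofReal (3 * (T ^ 2 * C ^ 2 * G ^ 2)) := ENNReal.ofReal_add_le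
      _ ≤ (ENNReal.ofReal (3 * (X₀ ω ^ 2)) + ENNReal.ofReal (3 * (μ ^ 2 * T ^ 2))) +
          ENNReal.ofReal (3 * (T ^ 2 * C ^ 2 * G ^ 2)) :=
          add_le_add_left ENNReal.ofReal_add_le _
      _ = F ω := by
          have h3 : ∀ x : ℝ, ENNReal.ofReal (3 * x) = 3 * ENNReal.ofReal x := fun x => by
            rw [ENNReal.ofReal_mul (by norm_num : (0:ℝ) ≤ 3)]; simp
          simp only [hFdef]
          rw [hGlω, ← ENNReal.ofReal_pow hG0, h3, h3, h3,
            ENNReal.ofReal_mul (by positivity : (0:ℝ) ≤ T ^ 2 * C ^ 2)]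
          ring
  -- Putting everything together
  calc ∫⁻ ω, ENNReal.ofReal ((⨆ t : Set.Icc (0 : ℝ) T, |X ω t|) ^ 2) ∂P
      ≤ ∫⁻ ω, F ω ∂P := lintegral_mono_ae hae
    _ = 3 * ENNReal.ofReal (∫ ω, X₀ ω ^ 2 ∂P) + 3 * ENNReal.ofReal (μ ^ 2 * T ^ 2) +
        3 * ENNReal.ofReal (T ^ 2 * C ^ 2) * ∫⁻ ω, Gl ω ^ 2 ∂P := by
        simp only [hFdef]
        rw [lintegral_add_right _ ((hGlm.pow_const 2).const_mul _),
          lintegral_add_right _ measurable_const,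
          lintegral_const_mul _ (hX₀m.pow_const 2).ennreal_ofReal,
          lintegral_const_mul _ ((hGlm.pow_const 2)),
          lintegral_const, measure_univ, mul_one, mul_assoc,
          ← ofReal_integral_eq_lintegral_ofReal hX₀i (ae_of_all _ fun ω => sq_nonneg _)]
    _ ≤ 3 * ENNReal.ofReal (∫ ω, X₀ ω ^ 2 ∂P) + 3 * ENNReal.ofReal (μ ^ 2 * T ^ 2) +
        3 * ENNReal.ofReal (T ^ 2 * C ^ 2) * ENNReal.ofReal S ^ 2 := by
        gcongr
    _ ≤ ENNReal.ofReal
          (3 * (1 + T ^ 2) * (1 + C ^ 2) *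
            ((∫ ω, X₀ ω ^ 2 ∂P) + μ ^ 2 + S ^ 2)) := by
        have e3 : ENNReal.ofReal (3:ℝ) = 3 := by simp
        rw [← ENNReal.ofReal_pow hS0, ← e3,
          ← ENNReal.ofReal_mul (by norm_num : (0:ℝ) ≤ 3),
          ← ENNReal.ofReal_mul (by norm_num : (0:ℝ) ≤ 3),
          ← ENNReal.ofReal_mul (by norm_num : (0:ℝ) ≤ 3),
          ← ENNReal.ofReal_mul (by positivity : (0:ℝ) ≤ 3 * (T ^ 2 * C ^ 2)),
          ← ENNReal.ofReal_add (mul_nonneg (by norm_num) hE0) (by positivity),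
          ← ENNReal.ofReal_add (add_nonneg (mul_nonneg (by norm_num) hE0) (by positivity))
            (by positivity)]
        refine ENNReal.ofReal_le_ofReal ?_
        nlinarith [hE0, hS0, sq_nonneg μ, sq_nonneg S, sq_nonneg T, sq_nonneg C,
          mul_nonneg hE0 (sq_nonneg T), mul_nonneg hE0 (sq_nonneg C),
          mul_nonneg (mul_nonneg hE0 (sq_nonneg T)) (sq_nonneg C),
          mul_nonneg (sq_nonneg μ) (sq_nonneg C),
          mul_nonneg (mul_nonneg (sq_nonneg μ) (sq_nonneg T)) (sq_nonneg C),
          mul_nonneg (sq_nonneg S) (sq_nonneg T),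
          mul_nonneg (mul_nonneg (sq_nonneg S) (sq_nonneg T)) (sq_nonneg C),
          mul_nonneg (sq_nonneg S) (sq_nonneg C)]
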